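/- The rate function duality holds: R(Q_Y, D) = sup_{β̃ ≤ 0} [ β̃D − E_{P_X}[ log E_{Q_Y}[ exp(β̃ d(X,Y)) ] ] ], where R(Q_Y,D) = inf over channels P_{Y|X} with E_{P_X P_{Y|X}}[d(X,Y)] ≤ D of D_KL(P_X P_{Y|X} ‖ P_X ⊗ Q_Y). -/

import Mathlib

open Real BigOperators Finset

/-- A probability mass function on a finite alphabet. -/
def IsPMF {α : Type*} [Fintype α] (p : α → ℝ) : Prop :=
  (∀ a, 0 ≤ p a) ∧ ∑ a, p a = 1

/-- KL divergence between PMFs on a finite alphabet (with the convention `0 log 0 = 0`). -/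
noncomputable def klFin {α : Type*} [Fintype α] (p q : α → ℝ) : ℝ :=
  ∑ a, if p a = 0 then 0 else p a * Real.log (p a / q a)

variable {𝓧 𝓨 : Type*} [Fintype 𝓧] [Fintype 𝓨]

/-- A channel (conditional distribution) from `𝓧` to `𝓨`. -/
def IsChannel (W : 𝓧 → 𝓨 → ℝ) : Prop :=
  (∀ x y, 0 ≤ W x y) ∧ ∀ x, ∑ y, W x y = 1

/-- Expected distortion of a source-channel pair. -/
noncomputable def avgDist (pX : 𝓧 → ℝ) (d : 𝓧 → 𝓨 → ℝ) (W : 𝓧 → 𝓨 → ℝ) : ℝ :=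
  ∑ x, ∑ y, pX x * W x y * d x y

/-- The rate function `R(Q_Y, D)`: the infimum of `D_KL(P_{X,Y} ‖ P_X ⊗ Q_Y)` over channels
`P_{Y|X}` with expected distortion at most `D`. -/
noncomputable def rateFun (pX : 𝓧 → ℝ) (Q : 𝓨 → ℝ) (d : 𝓧 → 𝓨 → ℝ) (D : ℝ) : ℝ :=
  sInf { r : ℝ | ∃ W : 𝓧 → 𝓨 → ℝ, IsChannel W ∧ avgDist pX d W ≤ D ∧
    r = klFin (fun p : 𝓧 × 𝓨 => pX p.1 * W p.1 p.2) (fun p : 𝓧 × 𝓨 => pX p.1 * Q p.2) }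

section AuxDuality
set_option linter.unusedSectionVars false
set_option linter.unusedVariables false

lemma term_ge (p q : ℝ) (hp : 0 ≤ p) (hq : 0 < q) :
    p - q ≤ if p = 0 then 0 else p * Real.log (p / q) := by
  split_ifs with h
  · simp [h]; linarith
  · have hp' : 0 < p := lt_of_le_of_ne hp (Ne.symm h)
    have h1 : Real.log (q / p) ≤ q / p - 1 := Real.log_le_sub_one_of_pos (by positivity)
    have h2 : Real.log (p / q) = - Real.log (q / p) := by
      rw [← Real.log_inv, inv_div]
    have h3 : p * (q / p - 1) = q - p := by field_simp
    nlinarith [mul_le_mul_of_nonneg_left h1 hp'.le]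

lemma gibbs {𝓨 : Type*} [Fintype 𝓨] [Nonempty 𝓨] (p q : 𝓨 → ℝ) (hp : ∀ y, 0 ≤ p y)
    (hps : ∑ y, p y = 1) (hq : ∀ y, 0 < q y) (hqs : ∑ y, q y = 1) :
    0 ≤ ∑ y, if p y = 0 then 0 else p y * Real.log (p y / q y) := by
  have h : ∑ y, (p y - q y) ≤ ∑ y, if p y = 0 then 0 else p y * Real.log (p y / q y) :=
    Finset.sum_le_sum fun y _ => term_ge _ _ (hp y) (hq y)
  rw [Finset.sum_sub_distrib, hps, hqs] at h
  simpa using h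

lemma weak_duality {𝓧 𝓨 : Type*} [Fintype 𝓧] [Fintype 𝓨] [Nonempty 𝓨]
    (pX : 𝓧 → ℝ) (hpX0 : ∀ x, 0 ≤ pX x) (Q : 𝓨 → ℝ) (hQpos : ∀ y, 0 < Q y)
    (d : 𝓧 → 𝓨 → ℝ) (D : ℝ) (β : ℝ) (hβ : β ≤ 0)
    (W : 𝓧 → 𝓨 → ℝ) (hW : (∀ x y, 0 ≤ W x y) ∧ ∀ x, ∑ y, W x y = 1)
    (hdist : (∑ x, ∑ y, pX x * W x y * d x y) ≤ D) :
    β * D - ∑ x, pX x * Real.log (∑ y, Q y * Real.exp (β * d x y))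
      ≤ ∑ p : 𝓧 × 𝓨, if pX p.1 * W p.1 p.2 = 0 then 0
          else pX p.1 * W p.1 p.2 * Real.log ((pX p.1 * W p.1 p.2) / (pX p.1 * Q p.2)) := by
  set Λ : 𝓧 → ℝ := fun x => ∑ y, Q y * Real.exp (β * d x y) with hΛdef
  have hΛpos : ∀ x, 0 < Λ x := fun x =>
    Finset.sum_pos (fun y _ => mul_pos (hQpos y) (Real.exp_pos _)) univ_nonempty
  have key : ∀ x, pX x * (β * (∑ y, W x y * d x y) - Real.log (Λ x))
      ≤ ∑ y, if pX x * W x y = 0 then 0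
          else pX x * W x y * Real.log ((pX x * W x y) / (pX x * Q y)) := by
    intro x
    rcases eq_or_lt_of_le (hpX0 x) with h0 | hpos
    · simp [← h0]
    · -- pX x > 0
      have hpx : pX x ≠ 0 := ne_of_gt hpos
      set qβ : 𝓨 → ℝ := fun y => Q y * Real.exp (β * d x y) / Λ x with hqβ
      have hqβpos : ∀ y, 0 < qβ y := fun y =>
        div_pos (mul_pos (hQpos y) (Real.exp_pos _)) (hΛpos x)
      have hqβsum : ∑ y, qβ y = 1 := by
        rw [hqβ]; rw [← Finset.sum_div]; exact div_self (hΛpos x).ne'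
      have hg := gibbs (W x) qβ (fun y => hW.1 x y) (hW.2 x) hqβpos hqβsum
      have hlogqβ : ∀ y, Real.log (qβ y) = Real.log (Q y) + β * d x y - Real.log (Λ x) := by
        intro y
        rw [hqβ]
        rw [Real.log_div (mul_pos (hQpos y) (Real.exp_pos _)).ne' (hΛpos x).ne', Real.log_mul (hQpos y).ne'
          (Real.exp_ne_zero _), Real.log_exp]
      have hpoint : ∀ y, (if W x y = 0 then 0 else W x y * Real.log (W x y / Q y))
          = (if W x y = 0 then 0 else W x y * Real.log (W x y / qβ y))
            + W x y * (β * d x y - Real.log (Λ x)) := by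
        intro y
        by_cases hw : W x y = 0
        · simp [hw]
        · have hwpos : 0 < W x y := lt_of_le_of_ne (hW.1 x y) (Ne.symm hw)
          simp only [hw, if_false]
          rw [Real.log_div hw (hQpos y).ne', Real.log_div hw (hqβpos y).ne', hlogqβ]
          ring
      have hsum1 : ∑ y, (if W x y = 0 then 0 else W x y * Real.log (W x y / Q y))
          = (∑ y, if W x y = 0 then 0 else W x y * Real.log (W x y / qβ y))
            + ∑ y, W x y * (β * d x y - Real.log (Λ x)) := by
        rw [← Finset.sum_add_distrib]; exact Finset.sum_congr rfl fun y _ => hpoint y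
      have hsum2 : ∑ y, W x y * (β * d x y - Real.log (Λ x))
          = β * (∑ y, W x y * d x y) - Real.log (Λ x) := by
        rw [Finset.sum_congr rfl (fun y _ => by ring :
          ∀ y ∈ univ, W x y * (β * d x y - Real.log (Λ x))
            = β * (W x y * d x y) - Real.log (Λ x) * W x y)]
        rw [Finset.sum_sub_distrib, ← Finset.mul_sum, ← Finset.mul_sum, hW.2 x, mul_one]
      have hWQ : β * (∑ y, W x y * d x y) - Real.log (Λ x)
          ≤ ∑ y, if W x y = 0 then 0 else W x y * Real.log (W x y / Q y) := by
        rw [hsum1, hsum2]; linarith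
      have hfac : ∑ y, (if pX x * W x y = 0 then 0
          else pX x * W x y * Real.log ((pX x * W x y) / (pX x * Q y)))
          = pX x * ∑ y, if W x y = 0 then 0 else W x y * Real.log (W x y / Q y) := by
        rw [Finset.mul_sum]
        refine Finset.sum_congr rfl fun y _ => ?_
        by_cases hw : W x y = 0
        · simp [hw]
        · rw [if_neg (by simp [hpx, hw]), if_neg hw,
            mul_div_mul_left _ _ hpx]
          ring
      rw [hfac]
      exact mul_le_mul_of_nonneg_left hWQ hpos.le
  have hsumkey : ∑ x, pX x * (β * (∑ y, W x y * d x y) - Real.log (Λ x))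
      ≤ ∑ p : 𝓧 × 𝓨, if pX p.1 * W p.1 p.2 = 0 then 0
          else pX p.1 * W p.1 p.2 * Real.log ((pX p.1 * W p.1 p.2) / (pX p.1 * Q p.2)) := by
    rw [Fintype.sum_prod_type]
    exact Finset.sum_le_sum fun x _ => key x
  refine le_trans ?_ hsumkey
  have hx : ∀ x, pX x * (β * (∑ y, W x y * d x y) - Real.log (Λ x))
      = β * (∑ y, pX x * W x y * d x y) - pX x * Real.log (Λ x) := by
    intro x
    have h' : ∑ y, pX x * W x y * d x y = pX x * ∑ y, W x y * d x y := by
      rw [Finset.mul_sum]; exact Finset.sum_congr rfl fun y _ => by ring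
    rw [h']; ring
  have hexp : ∑ x, pX x * (β * (∑ y, W x y * d x y) - Real.log (Λ x))
      = β * (∑ x, ∑ y, pX x * W x y * d x y) - ∑ x, pX x * Real.log (Λ x) := by
    rw [Finset.sum_congr rfl fun x _ => hx x, Finset.sum_sub_distrib, ← Finset.mul_sum]
  rw [hexp]
  have : β * D ≤ β * (∑ x, ∑ y, pX x * W x y * d x y) :=
    mul_le_mul_of_nonpos_left hdist hβ
  linarith


section tilted
variable {𝓧 𝓨 : Type*} [Fintype 𝓧] [Fintype 𝓨] [Nonempty 𝓨]
variable (pX : 𝓧 → ℝ) (Q : 𝓨 → ℝ) (hQpos : ∀ y, 0 < Q y) (d : 𝓧 → 𝓨 → ℝ) (β : ℝ)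
variable (Λ : 𝓧 → ℝ) (hΛ : ∀ x, Λ x = ∑ y, Q y * Real.exp (β * d x y))
variable (W : 𝓧 → 𝓨 → ℝ) (hWdef : ∀ x y, W x y = Q y * Real.exp (β * d x y) / Λ x)

include hQpos hΛ hWdef

omit hWdef in
lemma lam_pos : ∀ x, 0 < Λ x := fun x => by
  rw [hΛ x]; exact Finset.sum_pos (fun y _ => mul_pos (hQpos y) (Real.exp_pos _)) univ_nonempty

lemma tilted_channel : (∀ x y, 0 ≤ W x y) ∧ ∀ x, ∑ y, W x y = 1 := by
  have hΛpos := lam_pos Q hQpos d β Λ hΛ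
  constructor
  · intro x y
    rw [hWdef x y]
    exact div_nonneg (mul_nonneg (hQpos y).le (Real.exp_pos _).le) (hΛpos x).le
  · intro x
    rw [Finset.sum_congr rfl fun y _ => hWdef x y, ← Finset.sum_div, ← hΛ x]
    exact div_self (hΛpos x).ne'

lemma tilted_avg : ∑ x, ∑ y, pX x * W x y * d x y
    = ∑ x, pX x * ((∑ y, Q y * d x y * Real.exp (β * d x y)) / Λ x) := by
  refine Finset.sum_congr rfl fun x _ => ?_
  rw [Finset.sum_congr rfl (fun y _ => by rw [hWdef x y]; ring :
    ∀ y ∈ univ, pX x * W x y * d x y = pX x * (Q y * d x y * Real.exp (β * d x y) / Λ x))]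
  rw [← Finset.mul_sum, ← Finset.sum_div]

lemma tilted_kl (hpX0 : ∀ x, 0 ≤ pX x) :
    (∑ p : 𝓧 × 𝓨, if pX p.1 * W p.1 p.2 = 0 then 0
        else pX p.1 * W p.1 p.2 * Real.log ((pX p.1 * W p.1 p.2) / (pX p.1 * Q p.2)))
      = β * (∑ x, ∑ y, pX x * W x y * d x y) - ∑ x, pX x * Real.log (Λ x) := by
  have hΛpos := lam_pos Q hQpos d β Λ hΛ
  have hch := tilted_channel Q hQpos d β Λ hΛ W hWdef
  have hWpos : ∀ x y, 0 < W x y := fun x y => by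
    rw [hWdef x y]; exact div_pos (mul_pos (hQpos y) (Real.exp_pos _)) (hΛpos x)
  have hterm : ∀ x y, (if pX x * W x y = 0 then 0
      else pX x * W x y * Real.log ((pX x * W x y) / (pX x * Q y)))
      = pX x * W x y * (β * d x y - Real.log (Λ x)) := by
    intro x y
    by_cases hx : pX x = 0
    · simp [hx]
    · rw [if_neg (mul_ne_zero hx (hWpos x y).ne'), mul_div_mul_left _ _ hx]
      have hfrac : W x y / Q y = Real.exp (β * d x y) / Λ x := by
        rw [hWdef x y]
        field_simp
        rw [div_mul_eq_div_div, div_self (hQpos y).ne']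
      rw [hfrac, Real.log_div (Real.exp_ne_zero _) (hΛpos x).ne', Real.log_exp]
  have hx : ∀ x, ∑ y, pX x * W x y * (β * d x y - Real.log (Λ x))
      = β * (∑ y, pX x * W x y * d x y) - pX x * Real.log (Λ x) := by
    intro x
    rw [Finset.sum_congr rfl (fun y _ => by ring :
      ∀ y ∈ univ, pX x * W x y * (β * d x y - Real.log (Λ x))
        = β * (pX x * W x y * d x y) - pX x * Real.log (Λ x) * W x y)]
    rw [Finset.sum_sub_distrib, ← Finset.mul_sum, ← Finset.mul_sum, hch.2 x, mul_one]
  rw [Fintype.sum_prod_type]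
  rw [Finset.sum_congr rfl fun x _ =>
    (Finset.sum_congr rfl fun y _ => hterm x y).trans (hx x)]
  rw [Finset.sum_sub_distrib, ← Finset.mul_sum]

end tilted

lemma exists_opt_beta {𝓧 𝓨 : Type*} [Fintype 𝓧] [Fintype 𝓨] [Nonempty 𝓨]
    (pX : 𝓧 → ℝ) (hpX : (∀ x, 0 ≤ pX x) ∧ ∑ x, pX x = 1)
    (Q : 𝓨 → ℝ) (hQ1 : ∑ y, Q y = 1) (hQpos : ∀ y, 0 < Q y)
    (d : 𝓧 → 𝓨 → ℝ) (hd : ∀ x y, 0 ≤ d x y)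
    (D : ℝ) (hDint : (∑ x, pX x * ⨅ y, d x y) < D)
    (G : ℝ → ℝ)
    (hG : ∀ b, G b = ∑ x, pX x *
      ((∑ y, Q y * d x y * Real.exp (b * d x y)) / (∑ y, Q y * Real.exp (b * d x y)))) :
    ∃ β : ℝ, β ≤ 0 ∧ G β ≤ D ∧ β * G β = β * D := by
  have hΛpos : ∀ (b : ℝ) (x : 𝓧), 0 < ∑ y, Q y * Real.exp (b * d x y) := fun b x =>
    Finset.sum_pos (fun y _ => mul_pos (hQpos y) (Real.exp_pos _)) univ_nonempty
  have hGcont : Continuous G := by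
    have h1 : Continuous fun b : ℝ => ∑ x, pX x *
        ((∑ y, Q y * d x y * Real.exp (b * d x y)) / (∑ y, Q y * Real.exp (b * d x y))) := by
      apply continuous_finset_sum
      intro x _
      refine continuous_const.mul (Continuous.div ?_ ?_ (fun b => (hΛpos b x).ne'))
      · exact continuous_finset_sum _ fun y _ =>
          continuous_const.mul (Real.continuous_exp.comp (continuous_id.mul continuous_const))
      · exact continuous_finset_sum _ fun y _ =>
          continuous_const.mul (Real.continuous_exp.comp (continuous_id.mul continuous_const))
    rwa [show G = _ from funext hG]
  by_cases hcase : G 0 ≤ D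
  · exact ⟨0, le_refl 0, hcase, by ring⟩
  push_neg at hcase
  obtain ⟨y₀, hy₀⟩ := Finite.exists_min Q
  have hqmpos : 0 < Q y₀ := hQpos y₀
  have hminx : ∀ x, ∃ yx : 𝓨, (⨅ y, d x y) = d x yx ∧ ∀ y, d x yx ≤ d x y := by
    intro x
    obtain ⟨yx, hyx⟩ := Finite.exists_min (d x)
    exact ⟨yx, le_antisymm (ciInf_le (Set.Finite.bddBelow (Set.finite_range _)) yx)
      (le_ciInf hyx), hyx⟩
  choose ym hm hmle using hminx
  set m : 𝓧 → ℝ := fun x => ⨅ y, d x y with hmdef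
  set ε := D - ∑ x, pX x * m x with hε
  have hεpos : 0 < ε := sub_pos.mpr hDint
  set t := 1 / (ε * Q y₀) with ht
  have htpos : 0 < t := by rw [ht]; positivity
  set β₀ := -t with hβ₀
  have hβ₀neg : β₀ ≤ 0 := neg_nonpos.mpr htpos.le
  have hpt : ∀ s : ℝ, 0 ≤ s → t * (s * Real.exp (-(t * s))) ≤ 1 := by
    intro s hs
    have h1 : t * s ≤ Real.exp (t * s) :=
      le_trans (by linarith) (Real.add_one_le_exp (t * s))
    have h2 : Real.exp (t * s) * Real.exp (-(t * s)) = 1 := by rw [← Real.exp_add]; simp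
    have h3 : (0:ℝ) < Real.exp (-(t * s)) := Real.exp_pos _
    calc t * (s * Real.exp (-(t * s))) = (t * s) * Real.exp (-(t * s)) := by ring
      _ ≤ Real.exp (t * s) * Real.exp (-(t * s)) := mul_le_mul_of_nonneg_right h1 h3.le
      _ = 1 := h2
  have hb : G β₀ ≤ D := by
    rw [hG β₀]
    have hxbound : ∀ x, (∑ y, Q y * d x y * Real.exp (β₀ * d x y)) /
        (∑ y, Q y * Real.exp (β₀ * d x y)) ≤ m x + ε := by
      intro x
      rw [div_le_iff₀ (hΛpos β₀ x)]
      have hnum : ∀ y, Q y * d x y * Real.exp (β₀ * d x y)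
          ≤ Q y * m x * Real.exp (β₀ * d x y)
            + Q y * (ε * Q y₀ * Real.exp (β₀ * m x)) := by
        intro y
        have hs : 0 ≤ d x y - m x := sub_nonneg.mpr ((hm x).trans_le (hmle x y))
        have hsplit : Real.exp (β₀ * d x y)
            = Real.exp (-(t * (d x y - m x))) * Real.exp (β₀ * m x) := by
          rw [← Real.exp_add]; congr 1; rw [hβ₀]; ring
        have hkey : (d x y - m x) * Real.exp (-(t * (d x y - m x))) ≤ ε * Q y₀ := by
          have hp := hpt _ hs
          have h1t : t * (ε * Q y₀) = 1 := by
            rw [ht]; field_simp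
          nlinarith [htpos]
        have hfact : (d x y - m x) * Real.exp (β₀ * d x y)
            ≤ ε * Q y₀ * Real.exp (β₀ * m x) := by
          rw [hsplit, ← mul_assoc]
          exact mul_le_mul_of_nonneg_right hkey (Real.exp_pos _).le
        have hid : Q y * d x y * Real.exp (β₀ * d x y)
            = Q y * m x * Real.exp (β₀ * d x y)
              + Q y * ((d x y - m x) * Real.exp (β₀ * d x y)) := by ring
        nlinarith [mul_le_mul_of_nonneg_left hfact (hQpos y).le]
      have hΛlow : Q y₀ * Real.exp (β₀ * m x) ≤ ∑ y, Q y * Real.exp (β₀ * d x y) := by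
        have h1 : Q (ym x) * Real.exp (β₀ * d x (ym x))
            ≤ ∑ y, Q y * Real.exp (β₀ * d x y) :=
          Finset.single_le_sum (f := fun y => Q y * Real.exp (β₀ * d x y))
            (fun y _ => (mul_pos (hQpos y) (Real.exp_pos _)).le) (mem_univ _)
        have h2 : d x (ym x) = m x := (hm x).symm
        calc Q y₀ * Real.exp (β₀ * m x)
            ≤ Q (ym x) * Real.exp (β₀ * m x) :=
              mul_le_mul_of_nonneg_right (hy₀ (ym x)) (Real.exp_pos _).le
          _ = Q (ym x) * Real.exp (β₀ * d x (ym x)) := by rw [h2]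
          _ ≤ _ := h1
      calc ∑ y, Q y * d x y * Real.exp (β₀ * d x y)
          ≤ ∑ y, (Q y * m x * Real.exp (β₀ * d x y)
              + Q y * (ε * Q y₀ * Real.exp (β₀ * m x))) :=
            Finset.sum_le_sum fun y _ => hnum y
        _ = m x * (∑ y, Q y * Real.exp (β₀ * d x y))
            + ε * (Q y₀ * Real.exp (β₀ * m x)) := by
            rw [Finset.sum_add_distrib]
            congr 1
            · rw [Finset.mul_sum]; exact Finset.sum_congr rfl fun y _ => by ring
            · rw [← Finset.sum_mul, hQ1, one_mul]; ring
        _ ≤ (m x + ε) * (∑ y, Q y * Real.exp (β₀ * d x y)) := by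
            nlinarith [mul_le_mul_of_nonneg_left hΛlow hεpos.le]
    calc ∑ x, pX x * ((∑ y, Q y * d x y * Real.exp (β₀ * d x y)) /
          (∑ y, Q y * Real.exp (β₀ * d x y)))
        ≤ ∑ x, pX x * (m x + ε) :=
          Finset.sum_le_sum fun x _ => mul_le_mul_of_nonneg_left (hxbound x) (hpX.1 x)
      _ = ∑ x, pX x * m x + ε := by
          rw [Finset.sum_congr rfl fun x _ => mul_add (pX x) (m x) ε,
            Finset.sum_add_distrib, ← Finset.sum_mul, hpX.2, one_mul]
      _ = D := by rw [hε]; ring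
  obtain ⟨β, hβmem, hGβ⟩ := intermediate_value_Icc hβ₀neg hGcont.continuousOn ⟨hb, hcase.le⟩
  exact ⟨β, hβmem.2, le_of_eq hGβ, by rw [hGβ]⟩

end AuxDuality

/-- Rate function duality (Dembo–Kontoyiannis):
`R(Q_Y, D) = sup_{β̃ ≤ 0} [ β̃ D − E_{P_X}[log E_{Q_Y}[exp (β̃ d(X,Y))]] ]`
for `D` in the interior of the achievable distortion range. -/
theorem rateFun_duality [Nonempty 𝓨] (pX : 𝓧 → ℝ) (hpX : IsPMF pX) (Q : 𝓨 → ℝ) (hQ : IsPMF Q)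
    (hQpos : ∀ y, 0 < Q y) (d : 𝓧 → 𝓨 → ℝ) (hd : ∀ x y, 0 ≤ d x y)
    (D : ℝ) (hD0 : 0 < D) (hDint : (∑ x, pX x * ⨅ y, d x y) < D) :
    rateFun pX Q d D
      = sSup { s : ℝ | ∃ β : ℝ, β ≤ 0 ∧
          s = β * D - ∑ x, pX x * Real.log (∑ y, Q y * Real.exp (β * d x y)) } := by
  classical
  set R := { r : ℝ | ∃ W : 𝓧 → 𝓨 → ℝ, IsChannel W ∧ avgDist pX d W ≤ D ∧
    r = klFin (fun p : 𝓧 × 𝓨 => pX p.1 * W p.1 p.2) (fun p : 𝓧 × 𝓨 => pX p.1 * Q p.2) }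
    with hR
  set S := { s : ℝ | ∃ β : ℝ, β ≤ 0 ∧
      s = β * D - ∑ x, pX x * Real.log (∑ y, Q y * Real.exp (β * d x y)) } with hS
  have h0S : (0:ℝ) ∈ S := ⟨0, le_refl 0, by simp [hQ.2]⟩
  have weak : ∀ r ∈ R, ∀ s ∈ S, s ≤ r := by
    rintro r ⟨W, hW, hdist, rfl⟩ s ⟨β, hβ, rfl⟩
    exact weak_duality pX hpX.1 Q hQpos d D β hβ W hW hdist
  obtain ⟨β, hβ, hGle, hGeq⟩ := exists_opt_beta pX hpX Q hQ.2 hQpos d hd D hDint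
    (fun b => ∑ x, pX x *
      ((∑ y, Q y * d x y * Real.exp (b * d x y)) / (∑ y, Q y * Real.exp (b * d x y))))
    (fun b => rfl)
  set Λ : 𝓧 → ℝ := fun x => ∑ y, Q y * Real.exp (β * d x y) with hΛdef
  set W : 𝓧 → 𝓨 → ℝ := fun x y => Q y * Real.exp (β * d x y) / Λ x with hWdef
  have hΛ : ∀ x, Λ x = ∑ y, Q y * Real.exp (β * d x y) := fun x => rfl
  have hWd : ∀ x y, W x y = Q y * Real.exp (β * d x y) / Λ x := fun x y => rfl
  have hch := tilted_channel Q hQpos d β Λ hΛ W hWd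
  have havg : avgDist pX d W
      = ∑ x, pX x * ((∑ y, Q y * d x y * Real.exp (β * d x y)) / Λ x) :=
    tilted_avg pX Q hQpos d β Λ hΛ W hWd
  have hklv : klFin (fun p : 𝓧 × 𝓨 => pX p.1 * W p.1 p.2)
        (fun p : 𝓧 × 𝓨 => pX p.1 * Q p.2)
      = β * (∑ x, ∑ y, pX x * W x y * d x y) - ∑ x, pX x * Real.log (Λ x) :=
    tilted_kl pX Q hQpos d β Λ hΛ W hWd hpX.1
  have hdist : avgDist pX d W ≤ D := by rw [havg]; exact hGle
  have hr0R : β * (∑ x, ∑ y, pX x * W x y * d x y) - ∑ x, pX x * Real.log (Λ x) ∈ R :=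
    ⟨W, hch, hdist, hklv.symm⟩
  have hs0S : β * D - ∑ x, pX x * Real.log (Λ x) ∈ S := ⟨β, hβ, rfl⟩
  have hr0s0 : β * (∑ x, ∑ y, pX x * W x y * d x y) - ∑ x, pX x * Real.log (Λ x)
      = β * D - ∑ x, pX x * Real.log (Λ x) := by
    have h1 : (∑ x, ∑ y, pX x * W x y * d x y)
        = ∑ x, pX x * ((∑ y, Q y * d x y * Real.exp (β * d x y)) / Λ x) :=
      tilted_avg pX Q hQpos d β Λ hΛ W hWd
    rw [h1]
    rw [sub_left_inj]
    exact hGeq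
  show sInf R = sSup S
  apply le_antisymm
  · calc sInf R ≤ β * (∑ x, ∑ y, pX x * W x y * d x y) - ∑ x, pX x * Real.log (Λ x) :=
        csInf_le ⟨0, fun r hr => weak r hr 0 h0S⟩ hr0R
      _ = β * D - ∑ x, pX x * Real.log (Λ x) := hr0s0
      _ ≤ sSup S := le_csSup ⟨_, fun s hs => weak _ hr0R s hs⟩ hs0S
  · exact csSup_le ⟨0, h0S⟩ fun s hs => le_csInf ⟨_, hr0R⟩ fun r hr => weak r hr s hs
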